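/- Let V_• be a cochain complex of finite-dimensional vector spaces over a field k and let (T_i)_{i∈ℤ} be scalars such that for every stretch S of V_•, Σ_{i∈S} (-1)^i T_i = 0. Then there exists a null-homotopic chain map τ_• : V_• → V_• with tr(τ_i) = T_i for all i. -/

import Mathlib

open CategoryTheory

/-- A *stretch* of a cochain complex `V` indexed by `ℤ` is a finite interval `[M, N]`
maximal with respect to the property that all differentials within it are nonzero. -/
def IsStretch {k : Type*} [Field k] (V : CochainComplex (ModuleCat k) ℤ)
    (M N : ℤ) : Prop :=
  M ≤ N ∧ (∀ i : ℤ, M ≤ i → i < N → V.d i (i + 1) ≠ 0) ∧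
    V.d (M - 1) M = 0 ∧ V.d N (N + 1) = 0

section Aux

variable {k : Type*} [Field k]

private lemma aux_neg_one_sq (n : ℤ) : (-1 : k) ^ n * (-1 : k) ^ n = 1 := by
  rw [← mul_zpow]; norm_num

private lemma aux_neg_one_pred (n : ℤ) : (-1 : k) ^ (n - 1) = -((-1 : k) ^ n) := by
  rw [zpow_sub₀ (by norm_num : (-1 : k) ≠ 0), zpow_one]
  field_simp

private lemma aux_neg_one_ne (n : ℤ) : ((-1 : k) ^ n) ≠ 0 :=
  zpow_ne_zero n (by norm_num)

/-- The combinatorial heart: solving `c (i-1) + c i = T i` with `c i = 0` on zeros of `P`. -/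
private lemma exists_c (P : ℤ → Prop) (T : ℤ → k)
    (hTP : ∀ M N : ℤ, M ≤ N → (∀ i, M ≤ i → i < N → ¬ P i) → P (M - 1) → P N →
      ∑ i ∈ Finset.Icc M N, (-1 : k) ^ i * T i = 0) :
    ∃ c : ℤ → k, (∀ i, P i → c i = 0) ∧ (∀ i, c (i - 1) + c i = T i) := by
  classical
  set F : ℤ → k := fun i =>
    (∑ j ∈ Finset.Icc 1 i, (-1 : k) ^ j * T j)
      - ∑ j ∈ Finset.Icc (i + 1) 0, (-1 : k) ^ j * T j with hF
  have hFstep : ∀ i : ℤ, F i - F (i - 1) = (-1 : k) ^ i * T i := by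
    intro i
    rcases le_or_gt 1 i with h | h
    · have e1 : Finset.Icc (1 : ℤ) i = insert i (Finset.Icc 1 (i - 1)) := by
        ext x; simp [Finset.mem_Icc, Finset.mem_insert]; omega
      have e2 : Finset.Icc (i + 1) (0 : ℤ) = ∅ := Finset.Icc_eq_empty (by omega)
      have e3 : Finset.Icc (i - 1 + 1) (0 : ℤ) = ∅ := Finset.Icc_eq_empty (by omega)
      have hnot : i ∉ Finset.Icc (1 : ℤ) (i - 1) := by simp [Finset.mem_Icc]
      simp only [hF, e1, e2, e3, Finset.sum_insert hnot, Finset.sum_empty]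
      ring
    · have e1 : Finset.Icc (1 : ℤ) i = ∅ := Finset.Icc_eq_empty (by omega)
      have e2 : Finset.Icc (1 : ℤ) (i - 1) = ∅ := Finset.Icc_eq_empty (by omega)
      have e4 : i - 1 + 1 = i := by omega
      have e3 : Finset.Icc (i : ℤ) 0 = insert i (Finset.Icc (i + 1) 0) := by
        ext x; simp [Finset.mem_Icc, Finset.mem_insert]; omega
      have hnot : i ∉ Finset.Icc (i + 1) (0 : ℤ) := by simp [Finset.mem_Icc]
      simp only [hF, e1, e2, e4, e3, Finset.sum_insert hnot, Finset.sum_empty]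
      ring
  have hFsum : ∀ a b : ℤ, a ≤ b →
      ∑ j ∈ Finset.Icc a b, (-1 : k) ^ j * T j = F b - F (a - 1) := by
    intro a
    refine Int.le_induction ?_ ?_
    · rw [Finset.Icc_self, Finset.sum_singleton, ← hFstep a]
    · intro n hn ih
      have e1 : Finset.Icc a (n + 1) = insert (n + 1) (Finset.Icc a n) := by
        ext x; simp [Finset.mem_Icc, Finset.mem_insert]; omega
      have hnot : n + 1 ∉ Finset.Icc a n := by simp [Finset.mem_Icc]
      have hs := hFstep (n + 1)
      have e2 : n + 1 - 1 = n := by omega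
      rw [e2] at hs
      rw [e1, Finset.sum_insert hnot, ih, ← hs]
      ring
  -- greatest element machinery
  have hgr : ∀ i : ℤ, (∃ j, P j ∧ j ≤ i) →
      ∃ m : ℤ, (P m ∧ m ≤ i) ∧ ∀ j, (P j ∧ j ≤ i) → j ≤ m := by
    intro i h
    exact Int.exists_greatest_of_bdd ⟨i, fun z hz => hz.2⟩ h
  set G : ℤ → k := fun i =>
    if h1 : ∃ j, P j ∧ j ≤ i - 1 then F (Classical.choose (hgr (i - 1) h1))
    else if h2 : ∃ m, P m ∧ ∀ j, P j → m ≤ j then F (Classical.choose h2)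
    else 0 with hG
  set c : ℤ → k := fun i => if P i then 0 else (-1 : k) ^ i * (F i - G i) with hc
  refine ⟨c, fun i hi => by simp [hc, hi], ?_⟩
  intro i
  by_cases h0 : P (i - 1) <;> by_cases h1 : P i
  · -- both zero: T i = 0 from the one-point stretch
    have ht := hTP i i le_rfl (fun l hl1 hl2 => absurd hl1 (by omega)) h0 h1
    rw [Finset.Icc_self, Finset.sum_singleton] at ht
    have hT0 : T i = 0 := by
      rcases mul_eq_zero.mp ht with h | h
      · exact absurd h (aux_neg_one_ne i)
      · exact h
    have e1 : c (i - 1) = 0 := by simp [hc, h0]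
    have e2 : c i = 0 := by simp [hc, h1]
    rw [e1, e2, hT0, add_zero]
  · -- P (i-1), ¬ P i : c i = T i
    have hex : ∃ j, P j ∧ j ≤ i - 1 := ⟨i - 1, h0, le_rfl⟩
    have hspec := Classical.choose_spec (hgr (i - 1) hex)
    set g := Classical.choose (hgr (i - 1) hex) with hg
    have hgeq : g = i - 1 := le_antisymm hspec.1.2 (hspec.2 (i - 1) ⟨h0, le_rfl⟩)
    have hGi : G i = F (i - 1) := by
      rw [hG]; simp only [dif_pos hex]; rw [← hg, hgeq]
    have e2 : c i = T i := by
      simp only [hc, if_neg h1]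
      rw [hGi, hFstep i, ← mul_assoc, aux_neg_one_sq, one_mul]
    have e1 : c (i - 1) = 0 := by simp [hc, h0]
    rw [e1, e2, zero_add]
  · -- ¬ P (i-1), P i : c (i-1) = T i
    have hkey : G (i - 1) = F i := by
      by_cases hex : ∃ j, P j ∧ j ≤ i - 1 - 1
      · have hspec := Classical.choose_spec (hgr (i - 1 - 1) hex)
        set g := Classical.choose (hgr (i - 1 - 1) hex) with hg
        have hFi : F g = F i := by
          have hmid : ∀ l, g + 1 ≤ l → l < i → ¬ P l := by
            intro l hl1 hl2 hPl
            rcases lt_or_ge l (i - 1) with h' | h'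
            · exact absurd (hspec.2 l ⟨hPl, by omega⟩) (by omega)
            · have : l = i - 1 := by omega
              exact h0 (this ▸ hPl)
          have hb : P (g + 1 - 1) := by
            rw [show g + 1 - 1 = g by omega]; exact hspec.1.1
          have ht := hTP (g + 1) i (by omega) hmid hb h1
          rw [hFsum (g + 1) i (by omega), show g + 1 - 1 = g by omega] at ht
          rw [sub_eq_zero] at ht
          exact ht.symm
        rw [hG]; simp only [dif_pos hex]; rw [← hg, hFi]
      · have hex2 : ∃ m, P m ∧ ∀ j, P j → m ≤ j := by
          refine ⟨i, h1, fun j hj => ?_⟩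
          by_contra hlt
          push_neg at hlt
          rcases lt_or_ge j (i - 1) with h' | h'
          · exact hex ⟨j, hj, by omega⟩
          · exact h0 ((show j = i - 1 by omega) ▸ hj)
        have hspec := Classical.choose_spec hex2
        have : Classical.choose hex2 = i := by
          refine le_antisymm (hspec.2 i h1) ?_
          by_contra hlt
          push_neg at hlt
          rcases lt_or_ge (Classical.choose hex2) (i - 1) with h' | h'
          · exact hex ⟨_, hspec.1, by omega⟩
          · exact h0 ((show Classical.choose hex2 = i - 1 by omega) ▸ hspec.1)
        rw [hG]; simp only [dif_neg hex, dif_pos hex2, this]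
    have e1 : c (i - 1) = T i := by
      simp only [hc, if_neg h0]
      rw [hkey, aux_neg_one_pred]
      have hs := hFstep i
      have hsq := aux_neg_one_sq (k := k) i
      linear_combination ((-1 : k) ^ i) * hs + (T i) * hsq
    have e2 : c i = 0 := by simp [hc, h1]
    rw [e1, e2, add_zero]
  · -- neither: telescoping
    have hGG : G i = G (i - 1) := by
      by_cases hex : ∃ j, P j ∧ j ≤ i - 1
      · have hex2 : ∃ j, P j ∧ j ≤ i - 1 - 1 := by
          obtain ⟨j, hj, hle⟩ := hex
          refine ⟨j, hj, ?_⟩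
          rcases lt_or_ge j (i - 1) with h' | h'
          · omega
          · exact absurd ((show j = i - 1 by omega) ▸ hj) h0
        have hs1 := Classical.choose_spec (hgr (i - 1) hex)
        have hs2 := Classical.choose_spec (hgr (i - 1 - 1) hex2)
        have heq : Classical.choose (hgr (i - 1) hex)
            = Classical.choose (hgr (i - 1 - 1) hex2) := by
          refine le_antisymm (hs2.2 _ ⟨hs1.1.1, ?_⟩) (hs1.2 _ ⟨hs2.1.1, by omega⟩)
          rcases lt_or_ge (Classical.choose (hgr (i - 1) hex)) (i - 1) with h' | h'
          · omega
          · exact absurd ((show Classical.choose (hgr (i - 1) hex) = i - 1 by omega)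
              ▸ hs1.1.1) h0
        rw [hG]; simp only [dif_pos hex, dif_pos hex2, heq]
      · have hex2 : ¬ ∃ j, P j ∧ j ≤ i - 1 - 1 := by
          intro ⟨j, hj, hle⟩; exact hex ⟨j, hj, by omega⟩
        rw [hG]; simp only [dif_neg hex, dif_neg hex2]
    simp only [hc, if_neg h0, if_neg h1]
    rw [hGG, aux_neg_one_pred]
    have hs := hFstep i
    have hsq := aux_neg_one_sq (k := k) i
    linear_combination ((-1 : k) ^ i) * hs + (T i) * hsq

/-- Existence of a map with prescribed trace against a nonzero map. -/
private lemma exists_S {M N : Type*} [AddCommGroup M] [Module k M] [AddCommGroup N]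
    [Module k N] [FiniteDimensional k M] [FiniteDimensional k N]
    (f : M →ₗ[k] N) (hf : f ≠ 0) (t : k) :
    ∃ S : N →ₗ[k] M, LinearMap.trace k M (S ∘ₗ f) = t := by
  obtain ⟨v, hv⟩ : ∃ v, f v ≠ 0 := by
    by_contra h
    push_neg at h
    exact hf (LinearMap.ext fun x => by simp [h x])
  obtain ⟨φ, hφ⟩ : ∃ φ : Module.Dual k N, φ (f v) ≠ 0 := by
    by_contra h
    push_neg at h
    exact hv ((Module.forall_dual_apply_eq_zero_iff k _).mp h)
  refine ⟨(t * (φ (f v))⁻¹) • (LinearMap.toSpanSingleton k M v ∘ₗ φ), ?_⟩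
  have hcomp : ((t * (φ (f v))⁻¹) • (LinearMap.toSpanSingleton k M v ∘ₗ φ)) ∘ₗ f
      = (t * (φ (f v))⁻¹) • (LinearMap.toSpanSingleton k M v ∘ₗ (φ ∘ₗ f)) := by
    ext x; simp
  rw [hcomp, map_smul]
  have h2 : LinearMap.trace k M (LinearMap.toSpanSingleton k M v ∘ₗ (φ ∘ₗ f))
      = φ (f v) := by
    rw [← LinearMap.trace_comp_comm']
    have h3 : (φ ∘ₗ f) ∘ₗ LinearMap.toSpanSingleton k M v
        = (φ (f v)) • (LinearMap.id : k →ₗ[k] k) := by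
      ext
      simp [LinearMap.toSpanSingleton_apply]
    rw [h3, map_smul, LinearMap.trace_id]
    simp
  rw [h2]
  field_simp
  rw [smul_eq_mul, div_mul_cancel₀ t hφ]

end Aux

/-- Given scalars `T i` whose alternating sums over every stretch vanish, there is a
null-homotopic chain endomorphism `τ` with `tr (τ.f i) = T i` for all `i`. -/
theorem stmt_10 {k : Type*} [Field k] (V : CochainComplex (ModuleCat k) ℤ)
    [∀ i : ℤ, FiniteDimensional k (V.X i)] (T : ℤ → k)
    (hT : ∀ M N : ℤ, IsStretch V M N →
      ∑ i ∈ Finset.Icc M N, (-1 : k) ^ i * T i = 0) :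
    ∃ τ : V ⟶ V, Nonempty (Homotopy τ 0) ∧
      ∀ i : ℤ, LinearMap.trace k (V.X i) (τ.f i).hom = T i := by
  classical
  have hTP : ∀ M N : ℤ, M ≤ N → (∀ i, M ≤ i → i < N → ¬ (V.d i (i + 1) = 0)) →
      V.d (M - 1) (M - 1 + 1) = 0 → V.d N (N + 1) = 0 →
      ∑ i ∈ Finset.Icc M N, (-1 : k) ^ i * T i = 0 := by
    intro M N hMN hmid hM hN
    refine hT M N ⟨hMN, hmid, ?_, hN⟩
    rwa [show M - 1 + 1 = M by omega] at hM
  obtain ⟨c, hc0, hcrec⟩ := exists_c (fun i => V.d i (i + 1) = 0) T hTP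
  · -- choose the homotopy maps
    have hS : ∀ i j : ℤ, j + 1 = i → ∃ S : V.X i ⟶ V.X j,
        LinearMap.trace k (V.X j) (V.d j i ≫ S).hom = c j := by
      intro i j h
      subst h
      by_cases hd : V.d j (j + 1) = 0
      · exact ⟨0, by simp [hd, hc0 j hd]⟩
      · obtain ⟨S, hSt⟩ := exists_S (V.d j (j + 1)).hom
          (fun h => hd (ModuleCat.hom_ext (h.trans ModuleCat.hom_zero.symm))) (c j)
        exact ⟨ModuleCat.ofHom S, hSt⟩
    choose Smap hSmap using hS
    refine ⟨Homotopy.nullHomotopicMap' (fun i j h => Smap i j h),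
      ⟨Homotopy.nullHomotopy' _⟩, ?_⟩
    intro i
    have r₁₀ : (ComplexShape.up ℤ).Rel i (i + 1) := rfl
    have r₂₁ : (ComplexShape.up ℤ).Rel (i - 1) i := by simp [ComplexShape.up]
    rw [Homotopy.nullHomotopicMap'_f r₂₁ r₁₀]
    have h1 : LinearMap.trace k (V.X i) (V.d i (i + 1) ≫ Smap (i + 1) i r₁₀).hom = c i :=
      hSmap (i + 1) i r₁₀
    have h2 : LinearMap.trace k (V.X i) (Smap i (i - 1) r₂₁ ≫ V.d (i - 1) i).hom
        = c (i - 1) := by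
      have : (Smap i (i - 1) r₂₁ ≫ V.d (i - 1) i).hom
          = (V.d (i - 1) i).hom ∘ₗ (Smap i (i - 1) r₂₁).hom := rfl
      rw [this, LinearMap.trace_comp_comm']
      exact hSmap i (i - 1) r₂₁
    have hadd : LinearMap.trace k (V.X i)
        (V.d i (i + 1) ≫ Smap (i + 1) i r₁₀ + Smap i (i - 1) r₂₁ ≫ V.d (i - 1) i).hom
        = c i + c (i - 1) := by
      rw [ModuleCat.hom_add, map_add, h1, h2]
    rw [hadd, add_comm]
    exact hcrec i
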